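/- Let (g̃,∇̃) be the conformal-projective transformation of (g,∇) by smooth functions φ,ψ. Then (M,g,∇) is a statistical manifold admitting torsion if and only if (M,g̃,∇̃) is a statistical manifold admitting torsion. Moreover, the dual connection ∇̃*_{g̃} of ∇̃ with respect to g̃ and the dual connection ∇*_g of ∇ with respect to g satisfy ∇̃*_{g̃}=∇*_g+dψ⊗I+I⊗dψ−g⊗∇φ. -/

import Mathlib

/-!
We work in a concrete model of a pseudo-Riemannian manifold: the manifold `M` is
(an open chart of) a real normed space `E`, vector fields are maps `E → E`,
smooth functions are maps `E → ℝ`, a (pseudo-Riemannian) metric is a field of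
symmetric non-degenerate bilinear forms `g : E → E →ₗ[ℝ] E →ₗ[ℝ] ℝ`, a `1`-form
is a field of linear forms `η : E → E →ₗ[ℝ] ℝ`, and an affine connection is an
operation `D : (E → E) → (E → E) → (E → E)` on vector fields which is
function-linear in the first argument and a derivation in the second one.
-/

open scoped BigOperators

noncomputable section

variable {E : Type*} [NormedAddCommGroup E] [NormedSpace ℝ E]

/-- The derivative `X(f)` of a function `f` along a vector field `X`. -/
def dirD (f : E → ℝ) (X : E → E) : E → ℝ := fun x => fderiv ℝ f x (X x)

/-- The Lie bracket `[X, Y]` of two vector fields. -/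
def lieB (X Y : E → E) : E → E := fun x => fderiv ℝ Y x (X x) - fderiv ℝ X x (Y x)

/-- The torsion tensor `T^∇(X,Y) = ∇_X Y − ∇_Y X − [X,Y]` of an affine connection. -/
def tors (D : (E → E) → (E → E) → (E → E)) (X Y : E → E) : E → E :=
  fun x => D X Y x - D Y X x - lieB X Y x

/-- The curvature tensor `R^∇(X,Y)Z = ∇_X∇_Y Z − ∇_Y∇_X Z − ∇_{[X,Y]}Z`. -/
def curv (D : (E → E) → (E → E) → (E → E)) (X Y Z : E → E) : E → E :=
  fun x => D X (D Y Z) x - D Y (D X Z) x - D (lieB X Y) Z x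

/-- The covariant derivative `(∇_X g)(Y, Z)` of the metric `g`. -/
def covg (g : E → E →ₗ[ℝ] E →ₗ[ℝ] ℝ) (D : (E → E) → (E → E) → (E → E))
    (X Y Z : E → E) : E → ℝ :=
  fun x => fderiv ℝ (fun y => g y (Y y) (Z y)) x (X x)
    - g x (D X Y x) (Z x) - g x (Y x) (D X Z x)

/-- `g` is a pseudo-Riemannian metric: a symmetric non-degenerate bilinear form
at every point. -/
def IsMetric (g : E → E →ₗ[ℝ] E →ₗ[ℝ] ℝ) : Prop :=
  (∀ x u v, g x u v = g x v u) ∧ ∀ x u, (∀ v, g x u v = 0) → u = 0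

/-- `D` is an affine connection on vector fields. -/
def IsConn (D : (E → E) → (E → E) → (E → E)) : Prop :=
  (∀ X Y Z, D (fun x => X x + Y x) Z = fun x => D X Z x + D Y Z x) ∧
  (∀ (f : E → ℝ) (X Y), D (fun x => f x • X x) Y = fun x => f x • D X Y x) ∧
  (∀ X Y Z, D X (fun x => Y x + Z x) = fun x => D X Y x + D X Z x) ∧
  (∀ (f : E → ℝ) (X Y), D X (fun x => f x • Y x)
      = fun x => dirD f X x • Y x + f x • D X Y x)

/-- The connection `D` is flat: its curvature tensor vanishes identically. -/
def FlatConn (D : (E → E) → (E → E) → (E → E)) : Prop := ∀ X Y Z x, curv D X Y Z x = 0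

/-- The connection `D` is torsion-free: its torsion tensor vanishes identically. -/
def TorsFree (D : (E → E) → (E → E) → (E → E)) : Prop := ∀ X Y x, tors D X Y x = 0

/-- `(M, g, ∇)` is a statistical manifold admitting torsion (SMT):
`(∇_X g)(Y,Z) = (∇_Y g)(X,Z) − g(T^∇(X,Y),Z)`. -/
def IsSMT (g : E → E →ₗ[ℝ] E →ₗ[ℝ] ℝ) (D : (E → E) → (E → E) → (E → E)) : Prop :=
  ∀ X Y Z x, covg g D X Y Z x = covg g D Y X Z x - g x (tors D X Y x) (Z x)

/-- `(M, g, η, ∇)` is a semi-Weyl manifold admitting torsion (SWMT):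
`(∇_X g)(Y,Z) + η(X)g(Y,Z) = (∇_Y g)(X,Z) + η(Y)g(X,Z) − g(T^∇(X,Y),Z)`. -/
def IsSWMT (g : E → E →ₗ[ℝ] E →ₗ[ℝ] ℝ) (η : E → E →ₗ[ℝ] ℝ)
    (D : (E → E) → (E → E) → (E → E)) : Prop :=
  ∀ X Y Z x, covg g D X Y Z x + η x (X x) * g x (Y x) (Z x)
    = covg g D Y X Z x + η x (Y x) * g x (X x) (Z x) - g x (tors D X Y x) (Z x)

/-- `D` and `Ds` are dual connections with respect to `g`:
`X(g(Y,Z)) = g(∇_X Y, Z) + g(Y, ∇*_X Z)`. -/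
def DualConn (g : E → E →ₗ[ℝ] E →ₗ[ℝ] ℝ) (D Ds : (E → E) → (E → E) → (E → E)) : Prop :=
  ∀ X Y Z x, fderiv ℝ (fun y => g y (Y y) (Z y)) x (X x)
    = g x (D X Y x) (Z x) + g x (Y x) (Ds X Z x)

/-- `D` and `Ds` are semi-dual connections with respect to `(g, η)`:
`X(g(Y,Z)) = g(∇_X Y, Z) + g(Y, ∇*_X Z) − η(X)g(Y,Z)`. -/
def SemiDualConn (g : E → E →ₗ[ℝ] E →ₗ[ℝ] ℝ) (η : E → E →ₗ[ℝ] ℝ)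
    (D Ds : (E → E) → (E → E) → (E → E)) : Prop :=
  ∀ X Y Z x, fderiv ℝ (fun y => g y (Y y) (Z y)) x (X x)
    = g x (D X Y x) (Z x) + g x (Y x) (Ds X Z x) - η x (X x) * g x (Y x) (Z x)

/-- The Ricci tensor `Ric(Y,Z) = Σᵢ εᵢ g(R(Eᵢ,Y)Z, Eᵢ)` of a connection, computed
via a `g`-orthonormal frame `Efr` with signs `eps`. -/
def ricci (g : E → E →ₗ[ℝ] E →ₗ[ℝ] ℝ) (D : (E → E) → (E → E) → (E → E))
    {n : ℕ} (Efr : Fin n → E → E) (eps : Fin n → ℝ) (Y Z : E → E) : E → ℝ :=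
  fun x => ∑ i, eps i * g x (curv D (Efr i) Y Z x) (Efr i x)

/-- `trace (T_Y) = Σᵢ εᵢ g(T^∇(Eᵢ,Y), Eᵢ)`, the trace of `X ↦ T^∇(X,Y)`. -/
def trTor (g : E → E →ₗ[ℝ] E →ₗ[ℝ] ℝ) (D : (E → E) → (E → E) → (E → E))
    {n : ℕ} (Efr : Fin n → E → E) (eps : Fin n → ℝ) (Y : E → E) : E → ℝ :=
  fun x => ∑ i, eps i * g x (tors D (Efr i) Y x) (Efr i x)

/-- A vector field is tangent to the submanifold determined by the field of
(tangential) projections `P`. -/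
def Tang (P : E → E →ₗ[ℝ] E) (X : E → E) : Prop := ∀ x, P x (X x) = X x

/-- The projection of a vector field tangent to a lightlike hypersurface onto the
screen distribution, `P X = X − g(X,N)ξ`. -/
def scrP (g : E → E →ₗ[ℝ] E →ₗ[ℝ] ℝ) (ξ N : E → E) (X : E → E) : E → E :=
  fun x => X x - g x (X x) (N x) • ξ x

/-- The induced connection on sections of the screen distribution of a lightlike
hypersurface: the `S(TM')`-component of `∇_X Y` in `TM = S(TM') ⊕ Rad(TM') ⊕ tr(TM')`. -/
def scrConn (g : E → E →ₗ[ℝ] E →ₗ[ℝ] ℝ) (ξ N : E → E)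
    (D : (E → E) → (E → E) → (E → E)) : (E → E) → (E → E) → (E → E) :=
  fun X Y x => D X Y x - g x (D X Y x) (N x) • ξ x - g x (D X Y x) (ξ x) • N x

end

/-- Let `(g̃,∇̃)` be the conformal-projective transformation of
`(g,∇)` by smooth functions `φ,ψ`.  Then `(M,g,∇)` is a SMT iff `(M,g̃,∇̃)` is a SMT;
moreover the dual connections satisfy `∇̃*_{g̃} = ∇*_g + dψ⊗I + I⊗dψ − g⊗∇φ`. -/
theorem statement6 {E : Type*} [NormedAddCommGroup E] [NormedSpace ℝ E]
    (g gt : E → E →ₗ[ℝ] E →ₗ[ℝ] ℝ) (hg : IsMetric g)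
    (D Dt Dsg Dtsg : (E → E) → (E → E) → (E → E)) (hD : IsConn D)
    (φ ψ : E → ℝ) (hφ : ContDiff ℝ (⊤ : ℕ∞) φ) (hψ : ContDiff ℝ (⊤ : ℕ∞) ψ)
    (gradφ : E → E) (hgradφ : ∀ x v, g x (gradφ x) v = fderiv ℝ φ x v)
    (gradψ : E → E) (hgradψ : ∀ x v, g x (gradψ x) v = fderiv ℝ ψ x v)
    (hgt : ∀ x u v, gt x u v = Real.exp (φ x + ψ x) * g x u v)
    (hDt : ∀ X Y x, Dt X Y x
      = D X Y x + dirD φ X x • Y x + dirD φ Y x • X x - g x (X x) (Y x) • gradψ x)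
    (hdual : DualConn g D Dsg)
    (hdualt : DualConn gt Dt Dtsg) :
    (IsSMT g D ↔ IsSMT gt Dt) ∧
    (∀ X Y x, Dtsg X Y x
      = Dsg X Y x + dirD ψ X x • Y x + dirD ψ Y x • X x - g x (X x) (Y x) • gradφ x) := by
  obtain ⟨hsym, hnd⟩ := hg
  have hφd : Differentiable ℝ φ := hφ.differentiable (by simp)
  have hψd : Differentiable ℝ ψ := hψ.differentiable (by simp)
  have hE : ∀ x : E, Real.exp (φ x + ψ x) * Real.exp (-(φ x + ψ x)) = 1 := by
    intro x; rw [← Real.exp_add, add_neg_cancel, Real.exp_zero]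
  have hfder : ∀ x : E, fderiv ℝ (fun y => Real.exp (-(φ y + ψ y))) x
      = Real.exp (-(φ x + ψ x)) • (-(fderiv ℝ φ x + fderiv ℝ ψ x)) := by
    intro x
    exact ((((hφd x).hasFDerivAt.add (hψd x).hasFDerivAt).neg).exp).fderiv
  have key : ∀ X Z x, Dtsg X Z x
      = Dsg X Z x + dirD ψ X x • Z x + dirD ψ Z x • X x - g x (X x) (Z x) • gradφ x := by
    intro X Z x
    have hgφ : ∀ u, g x u (gradφ x) = fderiv ℝ φ x u := fun u => by
      rw [hsym]; exact hgradφ x u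
    have hgψ : ∀ u, g x u (gradψ x) = fderiv ℝ ψ x u := fun u => by
      rw [hsym]; exact hgradψ x u
    have hv : ∀ v : E, g x v (Dtsg X Z x
        - (Dsg X Z x + dirD ψ X x • Z x + dirD ψ Z x • X x - g x (X x) (Z x) • gradφ x)) = 0 := by
      intro v
      have hfun : (fun y => gt y ((fun y => Real.exp (-(φ y + ψ y)) • v) y) (Z y))
          = fun y => g y v (Z y) := by
        funext y
        rw [hgt, map_smul, LinearMap.smul_apply, smul_eq_mul, ← mul_assoc,
          ← Real.exp_add, add_neg_cancel, Real.exp_zero, one_mul]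
      have h1 := hdualt X (fun y => Real.exp (-(φ y + ψ y)) • v) Z x
      rw [hfun] at h1
      have h2 := hdual X (fun _ => v) Z x
      have hDXYv : D X (fun y => Real.exp (-(φ y + ψ y)) • v) x
          = dirD (fun y => Real.exp (-(φ y + ψ y))) X x • v
            + Real.exp (-(φ x + ψ x)) • D X (fun _ => v) x :=
        congrFun (hD.2.2.2 (fun y => Real.exp (-(φ y + ψ y))) X (fun _ => v)) x
      rw [hDt] at h1
      rw [hDXYv] at h1
      simp only [dirD, hfder, hgt, map_add, map_smul, map_sub, map_neg,
        LinearMap.add_apply, LinearMap.smul_apply, LinearMap.sub_apply, LinearMap.neg_apply,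
        ContinuousLinearMap.add_apply, ContinuousLinearMap.smul_apply,
        ContinuousLinearMap.neg_apply, smul_eq_mul, hgψ, hgφ] at h1 ⊢
      rw [h2] at h1
      rw [Real.exp_neg] at h1
      field_simp [Real.exp_ne_zero] at h1
      rw [hsym x (X x) v, hgradψ] at h1
      have hs : Real.exp (φ x + ψ x) ≠ 0 := Real.exp_ne_zero _
      apply mul_left_cancel₀ hs
      rw [mul_zero]
      linear_combination (-Real.exp (φ x + ψ x)) * h1
    have := hnd x _ (fun v => by rw [hsym]; exact hv v)
    exact sub_eq_zero.mp this
  have covgD : ∀ X Y Z x, covg g D X Y Z x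
      = g x (Y x) (Dsg X Z x) - g x (Y x) (D X Z x) := by
    intro X Y Z x
    simp only [covg, hdual X Y Z x]
    ring
  have covgDt : ∀ X Y Z x, covg gt Dt X Y Z x
      = gt x (Y x) (Dtsg X Z x) - gt x (Y x) (Dt X Z x) := by
    intro X Y Z x
    simp only [covg, hdualt X Y Z x]
    ring
  have diff : ∀ X Y Z x,
      covg gt Dt X Y Z x - covg gt Dt Y X Z x + gt x (tors Dt X Y x) (Z x)
      = Real.exp (φ x + ψ x)
        * (covg g D X Y Z x - covg g D Y X Z x + g x (tors D X Y x) (Z x)) := by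
    intro X Y Z x
    have hgφ : ∀ u, g x u (gradφ x) = fderiv ℝ φ x u := fun u => by
      rw [hsym]; exact hgradφ x u
    have hgψ : ∀ u, g x u (gradψ x) = fderiv ℝ ψ x u := fun u => by
      rw [hsym]; exact hgradψ x u
    rw [covgD, covgD, covgDt, covgDt]
    simp only [tors, key, hDt, hgt, dirD, map_add, map_sub, map_smul, map_neg,
      LinearMap.add_apply, LinearMap.sub_apply, LinearMap.smul_apply, LinearMap.neg_apply,
      smul_eq_mul, hgφ, hgψ, hgradφ, hgradψ]
    rw [hsym x (X x) (Y x)]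
    ring
  refine ⟨⟨fun h X Y Z x => ?_, fun h X Y Z x => ?_⟩, key⟩
  · have hd := diff X Y Z x
    rw [show covg g D X Y Z x - covg g D Y X Z x + g x (tors D X Y x) (Z x) = 0 by
      rw [h X Y Z x]; ring, mul_zero] at hd
    linarith
  · have hd := diff X Y Z x
    rw [h X Y Z x] at hd
    have h0 : covg g D X Y Z x - covg g D Y X Z x + g x (tors D X Y x) (Z x) = 0 := by
      rcases mul_eq_zero.mp (by linarith : Real.exp (φ x + ψ x)
        * (covg g D X Y Z x - covg g D Y X Z x + g x (tors D X Y x) (Z x)) = 0) with h' | h'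
      · exact absurd h' (Real.exp_ne_zero _)
      · exact h'
    linarith
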